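/- Let 𝒜 be an incomplete pairwise comparison matrix on n alternatives with connected graph G = (V,E), let L be the graph Laplacian of G, and let P be the n×n matrix with P_ij = ln 𝒜_ij if {i,j} ∈ E and P_ij = 0 otherwise. Then the linear system L y = P 1ₙ admits a solution y* ∈ ℝⁿ, and the full solution set is { y* + c·1ₙ : c ∈ ℝ }, i.e., the solution is unique up to adding a constant vector (in particular, it becomes unique after fixing one component of y). -/

import Mathlib

noncomputable section

/-- The graph Laplacian of `G`. -/
def lap {n : ℕ} (G : SimpleGraph (Fin n)) [DecidableRel G.Adj] :
    Matrix (Fin n) (Fin n) ℝ :=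
  Matrix.of fun i j =>
    if i = j then ((Finset.univ.filter fun k => G.Adj i k).card : ℝ)
    else if G.Adj i j then -1 else 0

/-- The matrix `P` with `P_ij = ln 𝒜_ij` on edges and `0` elsewhere. -/
def Pmat {n : ℕ} (G : SimpleGraph (Fin n)) [DecidableRel G.Adj]
    (A : Fin n → Fin n → ℝ) : Matrix (Fin n) (Fin n) ℝ :=
  Matrix.of fun i j => if G.Adj i j then Real.log (A i j) else 0

/-- **Solvability of the normal equations and uniqueness up to a constant.**
For an incomplete pairwise comparison matrix `𝒜` with connected graph `G`,
the linear system `L y = P 1ₙ` has a solution `y*`, and its full solution set is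
`{ y* + c·1ₙ : c ∈ ℝ }`. -/
lemma lap_eq {n : ℕ} (G : SimpleGraph (Fin n)) [DecidableRel G.Adj] :
    lap G = G.lapMatrix ℝ := by
  ext i j
  simp only [lap, Matrix.of_apply, SimpleGraph.lapMatrix, Matrix.sub_apply,
    SimpleGraph.degMatrix, SimpleGraph.adjMatrix, Matrix.of_apply]
  by_cases h : i = j
  · subst h
    have hfil : (Finset.univ.filter fun k => G.Adj i k) = G.neighborFinset i := by
      ext k; simp
    simp only [if_pos rfl, SimpleGraph.irrefl, if_false, sub_zero,
      Matrix.diagonal_apply_eq, SimpleGraph.degree, hfil]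
    rw [if_pos trivial]
  · simp [h]
    by_cases h2 : G.Adj i j <;> simp [h2]


theorem lap_system_solvable_unique_up_to_constant
    {n : ℕ} (G : SimpleGraph (Fin n)) [DecidableRel G.Adj] (hconn : G.Connected)
    (A : Fin n → Fin n → ℝ)
    (hpos : ∀ i j, G.Adj i j → 0 < A i j)
    (hrec : ∀ i j, G.Adj i j → A j i = 1 / A i j)
    (hzero : ∀ i j, ¬ G.Adj i j → A i j = 0) :
    ∃ ystar : Fin n → ℝ,
      (lap G).mulVec ystar = (Pmat G A).mulVec (fun _ => 1) ∧
      ∀ y : Fin n → ℝ,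
        (lap G).mulVec y = (Pmat G A).mulVec (fun _ => 1) ↔
          ∃ c : ℝ, y = ystar + c • (fun _ => (1 : ℝ)) := by
  classical
  obtain ⟨i0⟩ : Nonempty (Fin n) := hconn.nonempty
  set L : Matrix (Fin n) (Fin n) ℝ := G.lapMatrix ℝ with hL
  set b : Fin n → ℝ := (Pmat G A).mulVec (fun _ => 1) with hbdef
  rw [lap_eq]
  -- sum of b is zero
  have hanti : ∀ i j, Pmat G A j i = - Pmat G A i j := by
    intro i j
    by_cases h : G.Adj i j
    · simp only [Pmat, Matrix.of_apply, if_pos h, if_pos h.symm, hrec i j h, one_div,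
        Real.log_inv]
    · have h' : ¬ G.Adj j i := fun hh => h hh.symm
      simp [Pmat, h, h']
  have hb : ∑ i, b i = 0 := by
    have h1 : ∑ i, b i = ∑ i, ∑ j, Pmat G A i j := by
      simp [hbdef, Matrix.mulVec, dotProduct]
    have h2 : ∑ i, ∑ j, Pmat G A i j = - ∑ i, ∑ j, Pmat G A i j := by
      conv_lhs => rw [show (∑ i, ∑ j, Pmat G A i j) = ∑ j, ∑ i, Pmat G A i j from Finset.sum_comm]
      rw [← Finset.sum_neg_distrib]
      refine Finset.sum_congr rfl fun i _ => ?_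
      rw [← Finset.sum_neg_distrib]
      exact Finset.sum_congr rfl fun j _ => hanti i j
    linarith
  -- kernel characterization
  have hker : ∀ x : Fin n → ℝ, L.mulVec x = 0 ↔ ∃ c : ℝ, x = fun _ => c := by
    intro x
    constructor
    · intro hx
      have := (SimpleGraph.lapMatrix_mulVec_eq_zero_iff_forall_reachable (G := G) (x := x)).mp
        hx
      exact ⟨x i0, funext fun i => this i i0 (hconn i i0)⟩
    · rintro ⟨c, rfl⟩
      have : (fun _ : Fin n => c) = c • (fun _ : Fin n => (1:ℝ)) := by
        funext i; simp
      rw [this, Matrix.mulVec_smul, SimpleGraph.lapMatrix_mulVec_const_eq_zero, smul_zero]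
  -- the sum functional
  let f : (Fin n → ℝ) →ₗ[ℝ] ℝ :=
    { toFun := fun x => ∑ i, x i
      map_add' := fun x y => by simp [Finset.sum_add_distrib]
      map_smul' := fun c x => by simp [Finset.mul_sum] }
  have hfsurj : Function.Surjective f := by
    intro r
    refine ⟨fun i => if i = i0 then r else 0, ?_⟩
    simp [f]
  have hone : (fun _ : Fin n => (1:ℝ)) ≠ 0 := by
    intro h
    have := congrFun h i0
    simp at this
  -- kernel of L as a span
  have hkerL : LinearMap.ker (Matrix.toLin' L) = Submodule.span ℝ {fun _ : Fin n => (1:ℝ)} := by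
    ext x
    rw [LinearMap.mem_ker, Matrix.toLin'_apply, hker, Submodule.mem_span_singleton]
    constructor
    · rintro ⟨c, rfl⟩; exact ⟨c, by funext i; simp⟩
    · rintro ⟨c, rfl⟩; exact ⟨c, by funext i; simp⟩
  have hkerdim : Module.finrank ℝ (LinearMap.ker (Matrix.toLin' L)) = 1 := by
    rw [hkerL]
    exact finrank_span_singleton hone
  have hnpos : 0 < n := Fin.pos i0
  -- finrank of ker f
  have hkerfdim : Module.finrank ℝ (LinearMap.ker f) = n - 1 := by
    have h1 := LinearMap.finrank_range_add_finrank_ker f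
    rw [LinearMap.range_eq_top.mpr hfsurj] at h1
    simp only [finrank_top, Module.finrank_self, Module.finrank_fintype_fun_eq_card,
      Fintype.card_fin] at h1
    omega
  have hrangedim : Module.finrank ℝ (LinearMap.range (Matrix.toLin' L)) = n - 1 := by
    have h1 := LinearMap.finrank_range_add_finrank_ker (Matrix.toLin' L)
    rw [hkerdim] at h1
    simp at h1
    omega
  -- range ≤ ker f
  have hle : LinearMap.range (Matrix.toLin' L) ≤ LinearMap.ker f := by
    rintro _ ⟨x, rfl⟩
    rw [LinearMap.mem_ker]
    have : f (Matrix.toLin' L x) = dotProduct (fun _ => (1:ℝ)) (L.mulVec x) := by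
      simp [f, Matrix.toLin'_apply, dotProduct]
    rw [this, Matrix.dotProduct_mulVec]
    have hv : Matrix.vecMul (fun _ => (1:ℝ)) L = 0 := by
      rw [← Matrix.mulVec_transpose, (SimpleGraph.isSymm_lapMatrix ℝ G).eq]
      exact SimpleGraph.lapMatrix_mulVec_const_eq_zero G
    rw [hv, zero_dotProduct]
  have hrange : LinearMap.range (Matrix.toLin' L) = LinearMap.ker f :=
    Submodule.eq_of_le_of_finrank_eq hle (by rw [hrangedim, hkerfdim])
  have hbmem : b ∈ LinearMap.range (Matrix.toLin' L) := by
    rw [hrange, LinearMap.mem_ker]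
    exact hb
  obtain ⟨ystar, hystar⟩ := hbmem
  rw [Matrix.toLin'_apply] at hystar
  refine ⟨ystar, hystar, fun y => ?_⟩
  constructor
  · intro hy
    have hdiff : L.mulVec (y - ystar) = 0 := by
      rw [Matrix.mulVec_sub, hy, hystar, sub_self]
    obtain ⟨c, hc⟩ := (hker _).mp hdiff
    refine ⟨c, ?_⟩
    funext i
    have := congrFun hc i
    simp only [Pi.sub_apply] at this
    simp [Pi.add_apply]
    linarith
  · rintro ⟨c, rfl⟩
    rw [Matrix.mulVec_add, hystar, Matrix.mulVec_smul,
      SimpleGraph.lapMatrix_mulVec_const_eq_zero, smul_zero, add_zero]
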